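/- Let B > 0 and μ > 0, and let X have the gamma distribution with density f(x) = (B^{−μ/B}/Γ(μ/B)) x^{μ/B − 1} e^{−x/B} on (0,∞) (so that X has mean μ). Then for every t > 0, E(X | X > t) = μ + B t r(t). -/

import Mathlib

open MeasureTheory

open Set Real in
private lemma aux_integrableOn_rpow_mul_exp (s b : ℝ) (hs : -1 < s) (hb : 0 < b) :
    IntegrableOn (fun x : ℝ => x ^ s * Real.exp (-(b * x))) (Set.Ioi 0) := by
  have h := integrableOn_rpow_mul_exp_neg_mul_rpow (p := 1) hs one_pos hb
  refine h.congr_fun (fun x hx => ?_) measurableSet_Ioi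
  beta_reduce; rw [Real.rpow_one, neg_mul]

/-- For the gamma distribution with density
`f(x) = (B^(-μ/B)/Γ(μ/B)) x^(μ/B - 1) e^(-x/B)` on `(0,∞)` (mean `μ`), for
every `t > 0`: `E(X | X > t) = μ + B t r(t)`. -/
theorem conditional_mean_of_gamma_distribution
    (B μ : ℝ) (hB : 0 < B) (hμ : 0 < μ)
    (f : ℝ → ℝ)
    (hf : ∀ x, 0 < x →
      f x = B ^ (-(μ / B)) / Real.Gamma (μ / B) * x ^ (μ / B - 1) * Real.exp (-(x / B)))
    (hf_supp : ∀ x, x ≤ 0 → f x = 0)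
    (Fbar : ℝ → ℝ) (hFbar : ∀ t, Fbar t = ∫ x in Set.Ioi t, f x)
    (r : ℝ → ℝ) (hr : ∀ t, r t = f t / Fbar t)
    (t : ℝ) (ht : 0 < t) :
    (∫ x in Set.Ioi t, x * f x) / Fbar t = μ + B * t * r t := by
  set a : ℝ := μ / B with ha_def
  have ha : 0 < a := div_pos hμ hB
  set c : ℝ := B ^ (-(μ / B)) / Real.Gamma (μ / B) with hc_def
  have hc : 0 < c := div_pos (Real.rpow_pos_of_pos hB _) (Real.Gamma_pos_of_pos ha)
  have hBinv : 0 < B⁻¹ := inv_pos.mpr hB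
  -- pointwise positivity of f on positive reals
  have hfpos : ∀ x, 0 < x → 0 < f x := by
    intro x hx
    rw [hf x hx]
    have := Real.rpow_pos_of_pos hx (a - 1)
    positivity
  -- integrability of f on Ioi t
  have hI2 : IntegrableOn f (Set.Ioi t) := by
    have h0 : IntegrableOn (fun x : ℝ => c * (x ^ (a - 1) * Real.exp (-(B⁻¹ * x))))
        (Set.Ioi 0) := (aux_integrableOn_rpow_mul_exp (a - 1) B⁻¹ (by linarith) hBinv).const_mul c
    have h0' : IntegrableOn (fun x : ℝ => c * (x ^ (a - 1) * Real.exp (-(B⁻¹ * x))))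
        (Set.Ioi t) := h0.mono_set (Set.Ioi_subset_Ioi ht.le)
    refine h0'.congr_fun (fun x hx => ?_) measurableSet_Ioi
    have hx0 : 0 < x := lt_trans ht hx
    rw [hf x hx0]
    beta_reduce; rw [inv_mul_eq_div]
    ring
  -- integrability of x * f x on Ioi t
  have hI1 : IntegrableOn (fun x => x * f x) (Set.Ioi t) := by
    have h0 : IntegrableOn (fun x : ℝ => c * (x ^ a * Real.exp (-(B⁻¹ * x))))
        (Set.Ioi 0) := (aux_integrableOn_rpow_mul_exp a B⁻¹ (by linarith) hBinv).const_mul c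
    have h0' : IntegrableOn (fun x : ℝ => c * (x ^ a * Real.exp (-(B⁻¹ * x))))
        (Set.Ioi t) := h0.mono_set (Set.Ioi_subset_Ioi ht.le)
    refine h0'.congr_fun (fun x hx => ?_) measurableSet_Ioi
    have hx0 : 0 < x := lt_trans ht hx
    rw [hf x hx0]; beta_reduce; rw [inv_mul_eq_div]
    have : x ^ a = x * x ^ (a - 1) := by
      rw [← Real.rpow_one_add' hx0.le (by intro h; nlinarith)]
      ring_nf
    rw [this]
    ring
  -- positivity of Fbar t
  have hFpos : 0 < Fbar t := by
    rw [hFbar t]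
    rw [setIntegral_pos_iff_support_of_nonneg_ae ?_ hI2]
    · refine lt_of_lt_of_le ?_ (measure_mono (?_ : Set.Ioi t ⊆ _))
      · simp [ht]
      · intro x hx
        exact ⟨(hfpos x (lt_trans ht hx)).ne', hx⟩
    · filter_upwards [ae_restrict_mem measurableSet_Ioi] with x hx
      exact (hfpos x (lt_trans ht hx)).le
  -- the FTC step : ∫_{Ioi t} (x f x - μ f x) = B t f t
  have key : ∫ x in Set.Ioi t, (x * f x - μ * f x) = B * t * f t := by
    have hderiv : ∀ x ∈ Set.Ioi t,
        HasDerivAt (fun x : ℝ => -B * c * (x ^ a * Real.exp (-(x / B))))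
          (x * f x - μ * f x) x := by
      intro x hx
      have hx0 : 0 < x := lt_trans ht hx
      have h1 : HasDerivAt (fun x : ℝ => x ^ a) (a * x ^ (a - 1)) x :=
        Real.hasDerivAt_rpow_const (Or.inl hx0.ne')
      have h2 : HasDerivAt (fun x : ℝ => Real.exp (-(x / B))) (Real.exp (-(x / B)) * (-B⁻¹)) x := by
        have : HasDerivAt (fun x : ℝ => -(x / B)) (-B⁻¹) x := by
          exact ((hasDerivAt_id x).div_const B).neg.congr_deriv (by simp)
        exact (Real.hasDerivAt_exp _).comp x this
      have h3 := ((h1.mul h2).const_mul (-B * c))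
      refine h3.congr_deriv (Eq.symm ?_)
      rw [hf x hx0]
      have hxa : x ^ a = x * x ^ (a - 1) := by
        rw [← Real.rpow_one_add' hx0.le (by intro h; nlinarith)]
        ring_nf
      have hμa : μ = B * a := by rw [ha_def]; field_simp [hB.ne']
      rw [hxa, hμa]
      field_simp
      ring
    have hcont : ContinuousWithinAt (fun x : ℝ => -B * c * (x ^ a * Real.exp (-(x / B))))
        (Set.Ici t) t := by
      apply ContinuousAt.continuousWithinAt
      have h1 : ContinuousAt (fun x : ℝ => x ^ a) t :=
        Real.continuousAt_rpow_const t a (Or.inl ht.ne')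
      have h2 : ContinuousAt (fun x : ℝ => Real.exp (-(x / B))) t :=
        (Real.continuous_exp.comp ((continuous_id.div_const B).neg)).continuousAt
      exact continuousAt_const.mul (h1.mul h2)
    have hint : IntegrableOn (fun x => x * f x - μ * f x) (Set.Ioi t) :=
      hI1.sub (hI2.const_mul μ)
    have htend : Filter.Tendsto (fun x : ℝ => -B * c * (x ^ a * Real.exp (-(x / B))))
        Filter.atTop (nhds 0) := by
      have := (tendsto_rpow_mul_exp_neg_mul_atTop_nhds_zero a B⁻¹ hBinv).const_mul (-B * c)
      simpa [mul_comm, div_eq_mul_inv] using this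
    have := integral_Ioi_of_hasDerivAt_of_tendsto hcont hderiv hint htend
    rw [this, hf t ht]
    have hta : t ^ a = t * t ^ (a - 1) := by
      rw [← Real.rpow_one_add' ht.le (by intro h; nlinarith)]
      ring_nf
    rw [hta]
    ring
  have hsplit : ∫ x in Set.Ioi t, (x * f x - μ * f x)
      = (∫ x in Set.Ioi t, x * f x) - μ * ∫ x in Set.Ioi t, f x := by
    rw [integral_sub hI1 (hI2.const_mul μ), integral_const_mul]
  have hmain : ∫ x in Set.Ioi t, x * f x = μ * Fbar t + B * t * f t := by
    rw [hFbar t]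
    have := key
    rw [hsplit] at this
    linarith
  rw [hmain, hr t]
  field_simp
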